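/- arXiv:1511.00106 — 2 statements merged into one kernel-verified Lean document; each statement's English description precedes it below -/
import Mathlib

section
/- Assume the balance condition α + γ > 1 and set δ = 1 − 1/α + γ/α > 0. For every T > 0 there exists C > 0 such that for all t ∈ [0,T], s ∈ [0,t], and x, y ∈ ℝ^d, one has e^{−C t^δ} |x − θ_t^0(y)| − C t^{1/α + δ} ≤ |υ_{t−s}^{t−s}(x) − θ_s^0(y)| ≤ e^{C t^δ} |x − θ_t^0(y)| + C t^{1/α + δ}. -/
open MeasureTheory Real Set

/-- `Euc d` is the Euclidean space `ℝ^d`. -/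
abbrev Euc (d : ℕ) := EuclideanSpace ℝ (Fin d)

/-- The Gaussian mollification `b(t,x)` of the drift `b` at scale `t^{1/α}`:
`b(t,x) = (2π)^{-d/2} t^{-d/α} ∫ b(z) exp(-|z-x|²/(2 t^{2/α})) dz` for `t > 0`
(with the natural boundary value `b(x)` for `t ≤ 0`). -/
noncomputable def moll (d : ℕ) (α : ℝ) (b : Euc d → Euc d) (t : ℝ) (x : Euc d) : Euc d :=
  if t ≤ 0 then b x
  else ((2 * Real.pi) ^ (-(d : ℝ) / 2) * t ^ (-(d : ℝ) / α)) •
    ∫ z : Euc d, Real.exp (-‖z - x‖ ^ 2 / (2 * t ^ (2 / α))) • b z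

/-- `IsSol F x0 f` : `f` solves the Cauchy problem `f' (t) = F t (f t)` on `[0,∞)`, `f 0 = x0`. -/
def IsSol (d : ℕ) (F : ℝ → Euc d → Euc d) (x0 : Euc d) (f : ℝ → Euc d) : Prop :=
  f 0 = x0 ∧ ∀ t : ℝ, 0 ≤ t → HasDerivWithinAt f (F t (f t)) (Set.Ici 0) t

/-! ### Auxiliary Gaussian integral lemmas -/

lemma gauss_integrable (d : ℕ) {c : ℝ} (hc : 0 < c) :
    Integrable (fun v : Euc d => rexp (-c * ‖v‖ ^ 2)) := by
  have h := (GaussianFourier.integrable_cexp_neg_mul_sq_norm_add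
    (V := Euc d) (b := (c : ℂ)) (by simpa using hc) 0 0).re
  refine h.congr (Filter.Eventually.of_forall fun v => ?_)
  have : (-(c:ℂ) * (‖v‖:ℂ) ^ 2 + 0 * (inner ℝ (0 : Euc d) v : ℝ)) = ((-(c * ‖v‖^2) : ℝ) : ℂ) := by
    push_cast; ring
  simp only [RCLike.re_to_complex]
  rw [this, Complex.exp_ofReal_re, neg_mul]

lemma rpow_le_one_add {x γ : ℝ} (hx : 0 ≤ x) (h0 : 0 < γ) (h1 : γ ≤ 1) : x ^ γ ≤ 1 + x := by
  rcases le_total x 1 with h | h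
  · have : x ^ γ ≤ 1 := Real.rpow_le_one hx h h0.le
    linarith
  · have : x ^ γ ≤ x ^ (1:ℝ) := Real.rpow_le_rpow_of_exponent_le h h1
    rw [Real.rpow_one] at this; linarith

lemma moment_integrable (d : ℕ) {c γ : ℝ} (hc : 0 < c) (h0 : 0 < γ) (h1 : γ ≤ 1) :
    Integrable (fun v : Euc d => ‖v‖ ^ γ * rexp (-c * ‖v‖ ^ 2)) := by
  have hint := (gauss_integrable d (show 0 < c/2 by linarith)).const_mul (2 + 2/c)
  refine hint.mono' ?_ (Filter.Eventually.of_forall fun v => ?_)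
  · exact ((continuous_norm.rpow_const (fun x => Or.inr h0.le)).mul
      (continuous_const.mul (continuous_norm.pow 2)).rexp).aestronglyMeasurable
  · set x : ℝ := ‖v‖ with hxdef
    have hx : (0:ℝ) ≤ x := norm_nonneg v
    set E : ℝ := rexp (-(c/2) * x ^ 2) with hEdef
    have hE0 : 0 < E := Real.exp_pos _
    have hE1 : E ≤ 1 := Real.exp_le_one_iff.mpr (by nlinarith)
    have hsplit : rexp (-c * x ^ 2) = E * E := by
      rw [← Real.exp_add]; ring_nf
    have hA : x ^ γ ≤ 2 + x ^ 2 := by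
      have := rpow_le_one_add hx h0 h1; nlinarith
    have hC : x ^ 2 * E ≤ 2 / c := by
      set y : ℝ := c/2 * x^2 with hydef
      have hy : y ≤ rexp y := by have := Real.add_one_le_exp y; linarith
      have hyE : y * E ≤ 1 := by
        have hEy : E = (rexp y)⁻¹ := by
          rw [hEdef, hydef, ← Real.exp_neg]; ring_nf
        rw [hEy, ← div_eq_mul_inv, div_le_one (Real.exp_pos _)]
        exact hy
      have hx2 : x^2 * E = (2/c) * (y * E) := by
        rw [hydef]; field_simp
      rw [hx2]
      calc (2/c) * (y*E) ≤ (2/c) * 1 := by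
            apply mul_le_mul_of_nonneg_left hyE (by positivity)
        _ = 2/c := by ring
    have habs : |x ^ γ * rexp (-c * x ^ 2)| = x ^ γ * rexp (-c * x^2) := by
      apply abs_of_nonneg; positivity
    calc ‖x ^ γ * rexp (-c * x ^ 2)‖ = x ^ γ * (E * E) := by
          rw [Real.norm_eq_abs, habs, hsplit]
      _ ≤ (2 + x^2) * E * E := by
          have h' : x ^ γ * (E * E) = (x^γ * E) * E := by ring
          rw [h']
          apply mul_le_mul_of_nonneg_right _ hE0.le
          apply mul_le_mul_of_nonneg_right hA hE0.le
      _ = (2*E + (x^2*E)) * E := by ring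
      _ ≤ (2 + 2/c) * E := by
          apply mul_le_mul_of_nonneg_right _ hE0.le
          nlinarith

section MollEstimates

variable {d : ℕ} {α γ C₀ : ℝ} {b : Euc d → Euc d}

/-- The Gaussian moment constant. -/
noncomputable def Mnorm (d : ℕ) (γ : ℝ) : ℝ :=
  ∫ v : Euc d, ‖v‖ ^ γ * rexp (-(2⁻¹ : ℝ) * ‖v‖ ^ 2)

lemma Mnorm_nonneg (d : ℕ) (γ : ℝ) : 0 ≤ Mnorm d γ := by
  apply integral_nonneg
  intro v
  positivity

lemma continuous_of_holder (hγ0 : 0 < γ)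
    (hb_hol : ∀ x y : Euc d, ‖b x - b y‖ ≤ C₀ * ‖x - y‖ ^ γ) : Continuous b := by
  rw [continuous_iff_continuousAt]
  intro x₀
  rw [ContinuousAt, ← tendsto_sub_nhds_zero_iff]
  apply squeeze_zero_norm (fun x => hb_hol x x₀)
  have hcont : Continuous fun x : Euc d => C₀ * ‖x - x₀‖ ^ γ := by
    apply continuous_const.mul
    exact ((continuous_id.sub continuous_const).norm).rpow_const (fun _ => Or.inr hγ0.le)
  have := hcont.tendsto x₀
  simpa [Real.zero_rpow hγ0.ne'] using this

lemma kt_integrable (hα : 0 < α) {t : ℝ} (ht : 0 < t) :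
    Integrable (fun w : Euc d => rexp (-‖w‖ ^ 2 / (2 * t ^ (2/α)))) := by
  have hT : (0:ℝ) < t ^ (2/α) := Real.rpow_pos_of_pos ht _
  have heq : (fun w : Euc d => rexp (-‖w‖ ^ 2 / (2 * t ^ (2/α))))
      = fun w : Euc d => rexp (-(2 * t ^ (2/α))⁻¹ * ‖w‖ ^ 2) := by
    funext w; congr 1; ring
  rw [heq]
  exact gauss_integrable d (by positivity)

lemma kt_moment_integrable (hα : 0 < α) (hγ0 : 0 < γ) (hγ1 : γ ≤ 1) {t : ℝ} (ht : 0 < t) :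
    Integrable (fun w : Euc d => rexp (-‖w‖ ^ 2 / (2 * t ^ (2/α))) * ‖w‖ ^ γ) := by
  have hT : (0:ℝ) < t ^ (2/α) := Real.rpow_pos_of_pos ht _
  have heq : (fun w : Euc d => rexp (-‖w‖ ^ 2 / (2 * t ^ (2/α))) * ‖w‖ ^ γ)
      = fun w : Euc d => ‖w‖ ^ γ * rexp (-(2 * t ^ (2/α))⁻¹ * ‖w‖ ^ 2) := by
    funext w
    rw [mul_comm]
    congr 2
    ring
  rw [heq]
  exact moment_integrable d (by positivity) hγ0 hγ1

lemma kt_int_value (hα : 0 < α) {t : ℝ} (ht : 0 < t) :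
    ∫ w : Euc d, rexp (-‖w‖ ^ 2 / (2 * t ^ (2/α)))
      = (2 * π) ^ ((d:ℝ) / 2) * t ^ ((d:ℝ) / α) := by
  have hT : (0:ℝ) < t ^ (2/α) := Real.rpow_pos_of_pos ht _
  have h := GaussianFourier.integral_rexp_neg_mul_sq_norm
    (V := Euc d) (b := (2 * t ^ (2/α))⁻¹) (by positivity)
  have heq : (fun w : Euc d => rexp (-‖w‖ ^ 2 / (2 * t ^ (2/α))))
      = fun w : Euc d => rexp (-(2 * t ^ (2/α))⁻¹ * ‖w‖ ^ 2) := by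
    funext w; congr 1; field_simp
  rw [heq, h, finrank_euclideanSpace_fin]
  rw [show π / (2 * t ^ (2/α))⁻¹ = (2*π) * t ^ (2/α) by field_simp]
  rw [Real.mul_rpow (by positivity) hT.le]
  congr 1
  rw [← Real.rpow_mul ht.le]
  congr 1
  field_simp

lemma const_cancel (hα : 0 < α) {t : ℝ} (ht : 0 < t) :
    ((2 * π) ^ (-(d:ℝ) / 2) * t ^ (-(d:ℝ) / α)) * ((2 * π) ^ ((d:ℝ) / 2) * t ^ ((d:ℝ) / α)) = 1 := by
  have h2π : (0:ℝ) < 2 * π := by positivity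
  rw [mul_mul_mul_comm, ← Real.rpow_add h2π, ← Real.rpow_add ht]
  simp [neg_div]

lemma Qt_pos (hα : 0 < α) {t : ℝ} (ht : 0 < t) :
    0 < (2 * π) ^ (-(d:ℝ) / 2) * t ^ (-(d:ℝ) / α) :=
  mul_pos (Real.rpow_pos_of_pos (by positivity) _) (Real.rpow_pos_of_pos ht _)

lemma moll_repr (hα : 0 < α) {t : ℝ} (ht : 0 < t) (x : Euc d) :
    moll d α b t x = ((2 * π) ^ (-(d:ℝ) / 2) * t ^ (-(d:ℝ) / α)) •
      ∫ w : Euc d, rexp (-‖w‖ ^ 2 / (2 * t ^ (2/α))) • b (w + x) := by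
  rw [moll, if_neg (not_le.mpr ht)]
  congr 1
  rw [← integral_sub_right_eq_self
    (fun w : Euc d => rexp (-‖w‖ ^ 2 / (2 * t ^ (2/α))) • b (w + x)) x]
  simp

lemma integrand_integrable (hcont : Continuous b) (hb_bdd : ∀ x, ‖b x‖ ≤ C₀)
    (hα : 0 < α) {t : ℝ} (ht : 0 < t) (x : Euc d) :
    Integrable (fun w : Euc d => rexp (-‖w‖ ^ 2 / (2 * t ^ (2/α))) • b (w + x)) := by
  refine ((kt_integrable hα ht).const_mul C₀).mono' ?_
    (Filter.Eventually.of_forall fun w => ?_)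
  · refine Continuous.aestronglyMeasurable ?_
    refine Continuous.smul (f := fun w : Euc d => rexp (-‖w‖ ^ 2 / (2 * t ^ (2/α)))) ?_ (hcont.comp (by continuity))
    exact ((continuous_norm.pow 2).neg.div_const _).rexp
  · rw [norm_smul, Real.norm_eq_abs, abs_of_pos (Real.exp_pos _), mul_comm]
    exact mul_le_mul_of_nonneg_right (hb_bdd _) (Real.exp_pos _).le

lemma moll_holder (hγ0 : 0 < γ) (hC₀ : 0 < C₀) (hb_bdd : ∀ x, ‖b x‖ ≤ C₀)
    (hb_hol : ∀ x y : Euc d, ‖b x - b y‖ ≤ C₀ * ‖x - y‖ ^ γ) (hα : 0 < α)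
    (t : ℝ) (x y : Euc d) :
    ‖moll d α b t x - moll d α b t y‖ ≤ C₀ * ‖x - y‖ ^ γ := by
  by_cases ht : t ≤ 0
  · rw [moll, if_pos ht, moll, if_pos ht]; exact hb_hol x y
  push_neg at ht
  have hcont := continuous_of_holder hγ0 hb_hol
  have hQt := Qt_pos (d := d) hα ht
  rw [moll_repr hα ht x, moll_repr hα ht y, ← smul_sub,
    ← integral_sub (integrand_integrable hcont hb_bdd hα ht x)
      (integrand_integrable hcont hb_bdd hα ht y)]
  rw [norm_smul, Real.norm_eq_abs, abs_of_pos hQt]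
  have hIb : ‖∫ w : Euc d, (rexp (-‖w‖ ^ 2 / (2 * t ^ (2/α))) • b (w + x)
        - rexp (-‖w‖ ^ 2 / (2 * t ^ (2/α))) • b (w + y))‖
      ≤ ∫ w : Euc d, rexp (-‖w‖ ^ 2 / (2 * t ^ (2/α))) * (C₀ * ‖x - y‖ ^ γ) := by
    refine norm_integral_le_of_norm_le ((kt_integrable hα ht).mul_const _)
      (Filter.Eventually.of_forall fun w => ?_)
    rw [← smul_sub, norm_smul, Real.norm_eq_abs, abs_of_pos (Real.exp_pos _)]
    refine mul_le_mul_of_nonneg_left ?_ (Real.exp_pos _).le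
    have h := hb_hol (w + x) (w + y)
    rwa [add_sub_add_left_eq_sub] at h
  calc ((2 * π) ^ (-(d:ℝ) / 2) * t ^ (-(d:ℝ) / α)) * ‖_‖
      ≤ ((2 * π) ^ (-(d:ℝ) / 2) * t ^ (-(d:ℝ) / α)) *
        ∫ w : Euc d, rexp (-‖w‖ ^ 2 / (2 * t ^ (2/α))) * (C₀ * ‖x - y‖ ^ γ) :=
        mul_le_mul_of_nonneg_left hIb hQt.le
    _ = (((2 * π) ^ (-(d:ℝ) / 2) * t ^ (-(d:ℝ) / α)) *
          ((2 * π) ^ ((d:ℝ) / 2) * t ^ ((d:ℝ) / α))) * (C₀ * ‖x - y‖ ^ γ) := by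
        rw [integral_mul_const, kt_int_value hα ht]; ring
    _ = C₀ * ‖x - y‖ ^ γ := by rw [const_cancel hα ht, one_mul]

lemma kt_moment_value (hγ0 : 0 < γ) (hα : 0 < α) {t : ℝ} (ht : 0 < t) :
    ∫ w : Euc d, rexp (-‖w‖ ^ 2 / (2 * t ^ (2/α))) * ‖w‖ ^ γ
      = t ^ ((d:ℝ)/α) * (t ^ (γ/α) * Mnorm d γ) := by
  have hσ : 0 < t ^ ((1:ℝ)/α) := Real.rpow_pos_of_pos ht _
  have hσγ : (t ^ ((1:ℝ)/α)) ^ γ = t ^ (γ/α) := by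
    rw [← Real.rpow_mul ht.le]; congr 1; ring
  have hσd : (t ^ ((1:ℝ)/α)) ^ (d:ℕ) = t ^ ((d:ℝ)/α) := by
    rw [← Real.rpow_natCast (t ^ ((1:ℝ)/α)) d, ← Real.rpow_mul ht.le]
    congr 1; push_cast; ring
  have h := Measure.integral_comp_smul_of_nonneg (volume : Measure (Euc d))
    (fun w : Euc d => rexp (-‖w‖ ^ 2 / (2 * t ^ (2/α))) * ‖w‖ ^ γ) (t ^ ((1:ℝ)/α))
    (hR := hσ.le)
  have hptw : (fun v : Euc d => rexp (-‖(t ^ ((1:ℝ)/α)) • v‖ ^ 2 / (2 * t ^ (2/α)))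
        * ‖(t ^ ((1:ℝ)/α)) • v‖ ^ γ)
      = fun v : Euc d => t ^ (γ/α) * (‖v‖ ^ γ * rexp (-(2⁻¹:ℝ) * ‖v‖ ^ 2)) := by
    funext v
    have hnorm : ‖(t ^ ((1:ℝ)/α)) • v‖ = t ^ ((1:ℝ)/α) * ‖v‖ := by
      rw [norm_smul, Real.norm_eq_abs, abs_of_pos hσ]
    rw [hnorm, Real.mul_rpow hσ.le (norm_nonneg v), hσγ]
    have hsq : (t ^ ((1:ℝ)/α) * ‖v‖) ^ 2 = t ^ (2/α) * ‖v‖ ^ 2 := by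
      rw [mul_pow]
      congr 1
      rw [← Real.rpow_natCast (t ^ ((1:ℝ)/α)) 2, ← Real.rpow_mul ht.le]
      congr 1
      push_cast; ring
    rw [hsq]
    have hexp : -(t ^ (2/α) * ‖v‖ ^ 2) / (2 * t ^ (2/α)) = -(2⁻¹:ℝ) * ‖v‖ ^ 2 := by
      have hne : t ^ (2/α) ≠ 0 := (Real.rpow_pos_of_pos ht _).ne'
      field_simp
    rw [hexp]
    ring
  rw [hptw] at h
  rw [integral_const_mul, finrank_euclideanSpace_fin, smul_eq_mul] at h
  have hMn : t ^ (γ/α) * Mnorm d γ = ((t ^ ((1:ℝ)/α)) ^ (d:ℕ))⁻¹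
      * ∫ w : Euc d, rexp (-‖w‖ ^ 2 / (2 * t ^ (2/α))) * ‖w‖ ^ γ := h
  rw [hσd] at hMn
  have hTd : (0:ℝ) < t ^ ((d:ℝ)/α) := Real.rpow_pos_of_pos ht _
  field_simp at hMn
  simp only [← neg_div] at hMn
  linarith [hMn]

lemma moll_time (hγ0 : 0 < γ) (hγ1 : γ ≤ 1) (hC₀ : 0 < C₀) (hb_bdd : ∀ x, ‖b x‖ ≤ C₀)
    (hb_hol : ∀ x y : Euc d, ‖b x - b y‖ ≤ C₀ * ‖x - y‖ ^ γ) (hα : 0 < α)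
    {t : ℝ} (ht : 0 ≤ t) (x : Euc d) :
    ‖moll d α b t x - b x‖
      ≤ (C₀ * ((2 * π) ^ (-(d:ℝ)/2) * Mnorm d γ)) * t ^ (γ/α) := by
  rcases eq_or_lt_of_le ht with h | h
  · rw [← h, moll, if_pos le_rfl, sub_self, norm_zero,
      Real.zero_rpow (div_pos hγ0 hα).ne', mul_zero]
  have hcont := continuous_of_holder hγ0 hb_hol
  have hQt := Qt_pos (d := d) hα h
  have hbx : b x = ((2 * π) ^ (-(d:ℝ) / 2) * t ^ (-(d:ℝ) / α)) •
      ∫ w : Euc d, rexp (-‖w‖ ^ 2 / (2 * t ^ (2/α))) • b x := by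
    rw [integral_smul_const, kt_int_value hα h, smul_smul, const_cancel hα h, one_smul]
  rw [moll_repr hα h x]
  nth_rewrite 1 [hbx]
  rw [← smul_sub,
    ← integral_sub (integrand_integrable hcont hb_bdd hα h x) ((kt_integrable hα h).smul_const _)]
  rw [norm_smul, Real.norm_eq_abs, abs_of_pos hQt]
  have hIb : ‖∫ w : Euc d, (rexp (-‖w‖ ^ 2 / (2 * t ^ (2/α))) • b (w + x)
        - rexp (-‖w‖ ^ 2 / (2 * t ^ (2/α))) • b x)‖
      ≤ ∫ w : Euc d, C₀ * (rexp (-‖w‖ ^ 2 / (2 * t ^ (2/α))) * ‖w‖ ^ γ) := by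
    refine norm_integral_le_of_norm_le ((kt_moment_integrable hα hγ0 hγ1 h).const_mul _)
      (Filter.Eventually.of_forall fun w => ?_)
    rw [← smul_sub, norm_smul, Real.norm_eq_abs, abs_of_pos (Real.exp_pos _),
      show C₀ * (rexp (-‖w‖ ^ 2 / (2 * t ^ (2/α))) * ‖w‖ ^ γ)
        = rexp (-‖w‖ ^ 2 / (2 * t ^ (2/α))) * (C₀ * ‖w‖ ^ γ) by ring]
    refine mul_le_mul_of_nonneg_left ?_ (Real.exp_pos _).le
    have hh := hb_hol (w + x) x
    rwa [add_sub_cancel_right] at hh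
  calc ((2 * π) ^ (-(d:ℝ) / 2) * t ^ (-(d:ℝ) / α)) * ‖_‖
      ≤ ((2 * π) ^ (-(d:ℝ) / 2) * t ^ (-(d:ℝ) / α)) *
        ∫ w : Euc d, C₀ * (rexp (-‖w‖ ^ 2 / (2 * t ^ (2/α))) * ‖w‖ ^ γ) :=
        mul_le_mul_of_nonneg_left hIb hQt.le
    _ = (C₀ * ((2 * π) ^ (-(d:ℝ)/2) * Mnorm d γ)) * t ^ (γ/α)
        * (t ^ (-(d:ℝ) / α) * t ^ ((d:ℝ) / α)) := by
        rw [integral_const_mul, kt_moment_value hγ0 hα h]; ring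
    _ = (C₀ * ((2 * π) ^ (-(d:ℝ)/2) * Mnorm d γ)) * t ^ (γ/α) := by
        rw [← Real.rpow_add h]
        simp [neg_div]

lemma moll_pair (hγ0 : 0 < γ) (hγ1 : γ ≤ 1) (hC₀ : 0 < C₀) (hb_bdd : ∀ x, ‖b x‖ ≤ C₀)
    (hb_hol : ∀ x y : Euc d, ‖b x - b y‖ ≤ C₀ * ‖x - y‖ ^ γ) (hα : 0 < α)
    {t₁ t₂ : ℝ} (ht₁ : 0 ≤ t₁) (ht₂ : 0 ≤ t₂) (x y : Euc d) :
    ‖moll d α b t₁ x - moll d α b t₂ y‖ ≤ C₀ * ‖x - y‖ ^ γ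
      + (C₀ * ((2 * π) ^ (-(d:ℝ)/2) * Mnorm d γ)) * t₁ ^ (γ/α)
      + (C₀ * ((2 * π) ^ (-(d:ℝ)/2) * Mnorm d γ)) * t₂ ^ (γ/α) := by
  have h1 := moll_holder hγ0 hC₀ hb_bdd hb_hol hα t₁ x y
  have h2 := moll_time hγ0 hγ1 hC₀ hb_bdd hb_hol hα ht₁ y
  have h3 := moll_time hγ0 hγ1 hC₀ hb_bdd hb_hol hα ht₂ y
  calc ‖moll d α b t₁ x - moll d α b t₂ y‖
      ≤ ‖moll d α b t₁ x - moll d α b t₁ y‖ + ‖moll d α b t₁ y - moll d α b t₂ y‖ :=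
        norm_sub_le_norm_sub_add_norm_sub _ _ _
    _ ≤ ‖moll d α b t₁ x - moll d α b t₁ y‖ + (‖moll d α b t₁ y - b y‖
        + ‖b y - moll d α b t₂ y‖) := by
        gcongr
        exact norm_sub_le_norm_sub_add_norm_sub _ _ _
    _ ≤ C₀ * ‖x - y‖ ^ γ + ((C₀ * ((2 * π) ^ (-(d:ℝ)/2) * Mnorm d γ)) * t₁ ^ (γ/α)
        + (C₀ * ((2 * π) ^ (-(d:ℝ)/2) * Mnorm d γ)) * t₂ ^ (γ/α)) := by
        gcongr
        rw [norm_sub_rev]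
        exact h3
    _ = _ := by ring

lemma young_step (hγ0 : 0 < γ) (hγ1 : γ ≤ 1) (hα : 0 < α) {δ : ℝ}
    (hδ : δ = 1 - 1 / α + γ / α) {t g : ℝ} (ht : 0 < t) (hg : 0 ≤ g) :
    g ^ γ ≤ t ^ (δ - 1) * g + t ^ (γ/α) := by
  have hA : 0 ≤ t ^ (δ - 1) * g := mul_nonneg (Real.rpow_pos_of_pos ht _).le hg
  have hB : (0:ℝ) ≤ t ^ (γ/α) := (Real.rpow_pos_of_pos ht _).le
  have key : g ^ γ = (t ^ (δ - 1) * g) ^ γ * (t ^ (γ/α)) ^ (1 - γ) := by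
    rw [Real.mul_rpow (Real.rpow_pos_of_pos ht _).le hg, ← Real.rpow_mul ht.le,
      ← Real.rpow_mul ht.le, mul_comm ((t ^ ((δ-1)*γ)) * g ^ γ), ← mul_assoc,
      ← Real.rpow_add ht]
    rw [show γ/α * (1 - γ) + (δ - 1) * γ = 0 by rw [hδ]; field_simp; ring]
    rw [Real.rpow_zero, one_mul]
  rw [key]
  have := Real.geom_mean_le_arith_mean2_weighted hγ0.le (by linarith : (0:ℝ) ≤ 1 - γ)
    hA hB (by ring)
  nlinarith [this]

end MollEstimates


lemma gronwall_clean {D K ε z t' : ℝ} (hK : 0 < K) (hD : 0 ≤ D) (hε : 0 ≤ ε)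
    (hz : 0 ≤ z) (hzt : z ≤ t') :
    gronwallBound D K ε z ≤ (D + ε * t') * rexp (K * t') := by
  rw [gronwallBound_of_K_ne_0 hK.ne']
  have h1 : rexp (K * z) ≤ rexp (K * t') := Real.exp_le_exp.mpr (by nlinarith)
  have h2 : rexp (K * t') - 1 ≤ (K * t') * rexp (K * t') := by
    have h3 := Real.add_one_le_exp (-(K * t'))
    have h4 : rexp (-(K * t')) * rexp (K * t') = 1 := by rw [← Real.exp_add]; simp
    nlinarith [Real.exp_pos (K * t')]
  have h5 : rexp (K * z) - 1 ≤ (K * t') * rexp (K * t') := by linarith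
  have hstep : ε / K * (rexp (K * z) - 1) ≤ ε * t' * rexp (K * t') := by
    rw [div_mul_eq_mul_div, div_le_iff₀ hK]
    calc ε * (rexp (K * z) - 1) ≤ ε * ((K * t') * rexp (K * t')) :=
          mul_le_mul_of_nonneg_left h5 hε
      _ = ε * t' * rexp (K * t') * K := by ring
  have hD1 : D * rexp (K * z) ≤ D * rexp (K * t') := mul_le_mul_of_nonneg_left h1 hD
  calc D * rexp (K * z) + ε / K * (rexp (K * z) - 1)
      ≤ D * rexp (K * t') + ε * t' * rexp (K * t') := by linarith
    _ = (D + ε * t') * rexp (K * t') := by ring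

set_option maxHeartbeats 1000000 in
theorem approximate_flow_comparison
    (d : ℕ) (hd : 1 ≤ d) (α γ C₀ : ℝ)
    (hα : α ∈ Set.Ioo (0 : ℝ) 2) (hγ : γ ∈ Set.Ioc (0 : ℝ) 1) (hC₀ : 0 < C₀)
    (b : Euc d → Euc d)
    (hb_bdd : ∀ x, ‖b x‖ ≤ C₀)
    (hb_hol : ∀ x y, ‖b x - b y‖ ≤ C₀ * ‖x - y‖ ^ γ)
    (hbal : 1 < α + γ)
    (δ : ℝ) (hδ : δ = 1 - 1 / α + γ / α) :
    ∀ T > (0 : ℝ), ∃ C > (0 : ℝ),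
      ∀ t ∈ Set.Icc (0 : ℝ) T, ∀ s ∈ Set.Icc (0 : ℝ) t, ∀ x y : Euc d,
      ∀ u : ℝ → Euc d, IsSol d (fun τ z => moll d α b |τ - (t - s)| z) x u →
      ∀ θ : ℝ → Euc d, IsSol d (fun τ z => -moll d α b |τ| z) y θ →
        Real.exp (-(C * t ^ δ)) * ‖x - θ t‖ - C * t ^ (1 / α + δ) ≤ ‖u (t - s) - θ s‖ ∧
        ‖u (t - s) - θ s‖ ≤ Real.exp (C * t ^ δ) * ‖x - θ t‖ + C * t ^ (1 / α + δ) := by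
  intro T hT
  obtain ⟨hα0, hα2⟩ := hα
  obtain ⟨hγ0, hγ1⟩ := hγ
  have hδpos : 0 < δ := by
    rw [hδ, show 1 - 1 / α + γ / α = (α + γ - 1) / α by field_simp; ring]
    exact div_pos (by linarith) hα0
  have hαinv : 0 < 1 / α := by positivity
  set CM : ℝ := C₀ * ((2 * π) ^ (-(d:ℝ)/2) * Mnorm d γ) with hCM
  have hCMnn : 0 ≤ CM := by
    rw [hCM]
    exact mul_nonneg hC₀.le (mul_nonneg (Real.rpow_pos_of_pos (by positivity) _).le
      (Mnorm_nonneg d γ))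
  set C : ℝ := C₀ + (C₀ + 2 * CM + 1) * rexp (C₀ * T ^ δ) + 1 with hCdef
  have hexpT : (0:ℝ) < rexp (C₀ * T ^ δ) := Real.exp_pos _
  have hexpT1 : (1:ℝ) ≤ rexp (C₀ * T ^ δ) :=
    Real.one_le_exp (mul_nonneg hC₀.le (Real.rpow_nonneg hT.le _))
  have hCpos : 0 < C := by rw [hCdef]; nlinarith
  have hCC₀ : C₀ ≤ C := by rw [hCdef]; nlinarith
  have hCmain : (C₀ + 2 * CM) * rexp (C₀ * T ^ δ) ≤ C := by rw [hCdef]; nlinarith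
  have hCge : C₀ + 2 * CM ≤ C := by nlinarith
  refine ⟨C, hCpos, ?_⟩
  rintro t ⟨ht0, htT⟩ s ⟨hs0, hst⟩ x y u ⟨hu0, hu'⟩ θ ⟨hθ0, hθ'⟩
  rcases eq_or_lt_of_le ht0 with h0 | h0
  · -- degenerate case t = 0
    have ht' : t = 0 := h0.symm
    have hs' : s = 0 := le_antisymm (hst.trans_eq ht') hs0
    subst ht'; subst hs'
    rw [Real.zero_rpow hδpos.ne', Real.zero_rpow (by positivity : (0:ℝ) < 1/α + δ).ne']
    simp only [sub_zero, mul_zero, neg_zero, Real.exp_zero, one_mul, hu0]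
    constructor <;> linarith
  -- main case t > 0
  have hts0 : 0 ≤ t - s := by linarith
  have htst : t - s ≤ t := by linarith
  have hγα : (0:ℝ) < γ / α := div_pos hγ0 hα0
  have hDf : ∀ r ∈ Icc (0:ℝ) (t - s), HasDerivWithinAt (fun r' => u r' - θ (t - r'))
      (moll d α b |r - (t - s)| (u r) - moll d α b |t - r| (θ (t - r))) (Icc 0 (t - s)) r := by
    intro r hr
    have hu'' : HasDerivWithinAt u (moll d α b |r - (t - s)| (u r)) (Icc 0 (t - s)) r :=
      (hu' r hr.1).mono (fun z hz => hz.1)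
    have hθ'' : HasDerivWithinAt θ (-moll d α b |t - r| (θ (t - r))) (Ici 0) (t - r) :=
      hθ' (t - r) (by linarith [hr.2])
    have hj : HasDerivWithinAt (fun r' : ℝ => t - r') (-1 : ℝ) (Icc 0 (t - s)) r := by
      simpa using (hasDerivWithinAt_id r (Icc (0:ℝ) (t - s))).const_sub t
    have hmaps : MapsTo (fun r' : ℝ => t - r') (Icc 0 (t - s)) (Ici 0) := fun z hz => by
      show (0:ℝ) ≤ t - z; linarith [hz.2]
    have hw := hθ''.scomp r hj hmaps
    have hval : ((-1:ℝ) • (-moll d α b |t - r| (θ (t - r))))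
        = moll d α b |t - r| (θ (t - r)) := by simp
    rw [hval] at hw
    exact hu''.sub hw
  have hbound : ∀ r ∈ Icc (0:ℝ) (t - s),
      ‖moll d α b |r - (t - s)| (u r) - moll d α b |t - r| (θ (t - r))‖
        ≤ (C₀ * t ^ (δ - 1)) * ‖u r - θ (t - r)‖ + (C₀ + 2 * CM) * t ^ (γ/α) := by
    intro r hr
    have ha : |r - (t - s)| = t - s - r := by
      rw [abs_of_nonpos (by linarith [hr.2])]; ring
    have hc : |t - r| = t - r := abs_of_nonneg (by linarith [hr.2])
    have h1 := moll_pair hγ0 hγ1 hC₀ hb_bdd hb_hol hα0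
      (abs_nonneg (r - (t - s))) (abs_nonneg (t - r)) (u r) (θ (t - r))
    rw [← hCM] at h1
    have h3 : |r - (t - s)| ^ (γ/α) ≤ t ^ (γ/α) :=
      Real.rpow_le_rpow (abs_nonneg _) (by rw [ha]; linarith [hr.1]) hγα.le
    have h4 : |t - r| ^ (γ/α) ≤ t ^ (γ/α) :=
      Real.rpow_le_rpow (abs_nonneg _) (by rw [hc]; linarith [hr.1]) hγα.le
    have h2 := young_step hγ0 hγ1 hα0 hδ h0 (norm_nonneg (u r - θ (t - r)))
    have h2' := mul_le_mul_of_nonneg_left h2 hC₀.le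
    have h3' := mul_le_mul_of_nonneg_left h3 hCMnn
    have h4' := mul_le_mul_of_nonneg_left h4 hCMnn
    linarith [h1, h2', h3', h4']
  have hcontf : ContinuousOn (fun r' => u r' - θ (t - r')) (Icc 0 (t - s)) :=
    fun r hr => (hDf r hr).continuousWithinAt
  have harg2 : t - (t - s) = s := by ring
  have hFwd := norm_le_gronwallBound_of_norm_deriv_right_le (a := 0) (b := t - s)
    (f := fun r' => u r' - θ (t - r'))
    (f' := fun r => moll d α b |r - (t - s)| (u r) - moll d α b |t - r| (θ (t - r)))
    (δ := ‖u 0 - θ (t - 0)‖) (K := C₀ * t ^ (δ - 1)) (ε := (C₀ + 2 * CM) * t ^ (γ/α))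
    hcontf
    (fun r hr => (hDf r (Ico_subset_Icc_self hr)).mono_of_mem_nhdsWithin (Icc_mem_nhdsGE_of_mem hr))
    le_rfl
    (fun r hr => hbound r (Ico_subset_Icc_self hr))
    (t - s) ⟨hts0, le_rfl⟩
  have hKpos : 0 < C₀ * t ^ (δ - 1) := mul_pos hC₀ (Real.rpow_pos_of_pos h0 _)
  have hεnn : 0 ≤ (C₀ + 2 * CM) * t ^ (γ/α) :=
    mul_nonneg (by linarith) (Real.rpow_nonneg ht0 _)
  have hFwd2 : ‖u (t - s) - θ s‖ ≤ (‖x - θ t‖ + ((C₀ + 2 * CM) * t ^ (γ/α)) * t)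
      * rexp ((C₀ * t ^ (δ - 1)) * t) := by
    have hgb := gronwall_clean (t' := t) hKpos (norm_nonneg (u 0 - θ (t - 0))) hεnn
      (z := t - s - 0) (by linarith) (by linarith)
    have h := hFwd.trans hgb
    simp only [sub_zero, hu0, harg2] at h
    exact h
  have hDg : ∀ r ∈ Icc (0:ℝ) (t - s),
      HasDerivWithinAt (fun r' => u (t - s - r') - θ (t - (t - s - r')))
        (-(moll d α b |t - s - r - (t - s)| (u (t - s - r))
          - moll d α b |t - (t - s - r)| (θ (t - (t - s - r))))) (Icc 0 (t - s)) r := by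
    intro r hr
    have hmem : t - s - r ∈ Icc (0:ℝ) (t - s) := ⟨by linarith [hr.2], by linarith [hr.1]⟩
    have hj : HasDerivWithinAt (fun r' : ℝ => t - s - r') (-1 : ℝ) (Icc 0 (t - s)) r := by
      simpa using (hasDerivWithinAt_id r (Icc (0:ℝ) (t - s))).const_sub (t - s)
    have hmaps : MapsTo (fun r' : ℝ => t - s - r') (Icc 0 (t - s)) (Icc 0 (t - s)) :=
      fun z hz => ⟨show (0:ℝ) ≤ t - s - z by linarith [hz.2],
        show t - s - z ≤ t - s by linarith [hz.1]⟩
    have hw := (hDf (t - s - r) hmem).scomp r hj hmaps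
    have hval : ((-1:ℝ) • (moll d α b |t - s - r - (t - s)| (u (t - s - r))
          - moll d α b |t - (t - s - r)| (θ (t - (t - s - r)))))
        = -(moll d α b |t - s - r - (t - s)| (u (t - s - r))
          - moll d α b |t - (t - s - r)| (θ (t - (t - s - r)))) := by simp
    rw [hval] at hw
    exact hw
  have hcontg : ContinuousOn (fun r' => u (t - s - r') - θ (t - (t - s - r')))
      (Icc 0 (t - s)) := fun r hr => (hDg r hr).continuousWithinAt
  have hBwd := norm_le_gronwallBound_of_norm_deriv_right_le (a := 0) (b := t - s)
    (f := fun r' => u (t - s - r') - θ (t - (t - s - r')))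
    (f' := fun r => -(moll d α b |t - s - r - (t - s)| (u (t - s - r))
      - moll d α b |t - (t - s - r)| (θ (t - (t - s - r)))))
    (δ := ‖u (t - s - 0) - θ (t - (t - s - 0))‖) (K := C₀ * t ^ (δ - 1))
    (ε := (C₀ + 2 * CM) * t ^ (γ/α))
    hcontg
    (fun r hr => (hDg r (Ico_subset_Icc_self hr)).mono_of_mem_nhdsWithin (Icc_mem_nhdsGE_of_mem hr))
    le_rfl
    (fun r hr => by
      rw [norm_neg]
      exact hbound (t - s - r) ⟨by linarith [hr.2], by linarith [hr.1]⟩)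
    (t - s) ⟨hts0, le_rfl⟩
  have hBwd2 : ‖x - θ t‖ ≤ (‖u (t - s) - θ s‖ + ((C₀ + 2 * CM) * t ^ (γ/α)) * t)
      * rexp ((C₀ * t ^ (δ - 1)) * t) := by
    have hgb := gronwall_clean (t' := t) hKpos
      (norm_nonneg (u (t - s - 0) - θ (t - (t - s - 0)))) hεnn
      (z := t - s - 0) (by linarith) (by linarith)
    have h := hBwd.trans hgb
    simp only [sub_zero, sub_self, hu0, harg2] at h
    exact h
  have hKt : (C₀ * t ^ (δ - 1)) * t = C₀ * t ^ δ := by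
    rw [mul_assoc]
    congr 1
    nth_rewrite 2 [← Real.rpow_one t]
    rw [← Real.rpow_add h0]
    ring_nf
  have hεt : ((C₀ + 2 * CM) * t ^ (γ/α)) * t = (C₀ + 2 * CM) * t ^ (1/α + δ) := by
    rw [mul_assoc]
    congr 1
    nth_rewrite 2 [← Real.rpow_one t]
    rw [← Real.rpow_add h0]
    congr 1
    rw [hδ]; ring
  rw [hKt, hεt] at hFwd2 hBwd2
  have htδ : t ^ δ ≤ T ^ δ := Real.rpow_le_rpow ht0 htT hδpos.le
  have htδnn : (0:ℝ) ≤ t ^ δ := Real.rpow_nonneg ht0 _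
  have ht1δnn : (0:ℝ) ≤ t ^ (1/α + δ) := Real.rpow_nonneg ht0 _
  have hexp1 : rexp (C₀ * t ^ δ) ≤ rexp (C * t ^ δ) :=
    Real.exp_le_exp.mpr (mul_le_mul_of_nonneg_right hCC₀ htδnn)
  have hexp2 : rexp (C₀ * t ^ δ) ≤ rexp (C₀ * T ^ δ) :=
    Real.exp_le_exp.mpr (mul_le_mul_of_nonneg_left htδ hC₀.le)
  have hGnn : (0:ℝ) ≤ ‖u (t - s) - θ s‖ := norm_nonneg _
  have hAnn : (0:ℝ) ≤ ‖x - θ t‖ := norm_nonneg _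
  constructor
  · have step1 : ‖x - θ t‖ ≤ (‖u (t - s) - θ s‖ + (C₀ + 2 * CM) * t ^ (1/α + δ))
        * rexp (C * t ^ δ) := by
      refine hBwd2.trans (mul_le_mul_of_nonneg_left hexp1 ?_)
      have := mul_nonneg (show (0:ℝ) ≤ C₀ + 2 * CM by linarith) ht1δnn
      linarith
    have hEE : rexp (-(C * t ^ δ)) * rexp (C * t ^ δ) = 1 := by
      rw [← Real.exp_add]; simp
    have hE'pos : (0:ℝ) < rexp (-(C * t ^ δ)) := Real.exp_pos _
    have step2 : rexp (-(C * t ^ δ)) * ‖x - θ t‖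
        ≤ ‖u (t - s) - θ s‖ + (C₀ + 2 * CM) * t ^ (1/α + δ) := by
      calc rexp (-(C * t ^ δ)) * ‖x - θ t‖
          ≤ rexp (-(C * t ^ δ)) * ((‖u (t - s) - θ s‖ + (C₀ + 2 * CM) * t ^ (1/α + δ))
            * rexp (C * t ^ δ)) := mul_le_mul_of_nonneg_left step1 hE'pos.le
        _ = (rexp (-(C * t ^ δ)) * rexp (C * t ^ δ))
            * (‖u (t - s) - θ s‖ + (C₀ + 2 * CM) * t ^ (1/α + δ)) := by ring
        _ = ‖u (t - s) - θ s‖ + (C₀ + 2 * CM) * t ^ (1/α + δ) := by rw [hEE, one_mul]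
    have hlast : (C₀ + 2 * CM) * t ^ (1/α + δ) ≤ C * t ^ (1/α + δ) :=
      mul_le_mul_of_nonneg_right hCge ht1δnn
    linarith
  · have e1 : ‖x - θ t‖ * rexp (C₀ * t ^ δ) ≤ ‖x - θ t‖ * rexp (C * t ^ δ) :=
      mul_le_mul_of_nonneg_left hexp1 hAnn
    have e2 : ((C₀ + 2 * CM) * t ^ (1/α + δ)) * rexp (C₀ * t ^ δ)
        ≤ C * t ^ (1/α + δ) := by
      calc ((C₀ + 2 * CM) * t ^ (1/α + δ)) * rexp (C₀ * t ^ δ)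
          ≤ ((C₀ + 2 * CM) * t ^ (1/α + δ)) * rexp (C₀ * T ^ δ) := by
            refine mul_le_mul_of_nonneg_left hexp2 ?_
            exact mul_nonneg (by linarith) ht1δnn
        _ = ((C₀ + 2 * CM) * rexp (C₀ * T ^ δ)) * t ^ (1/α + δ) := by ring
        _ ≤ C * t ^ (1/α + δ) := mul_le_mul_of_nonneg_right hCmain ht1δnn
    calc ‖u (t - s) - θ s‖
        ≤ (‖x - θ t‖ + (C₀ + 2 * CM) * t ^ (1/α + δ)) * rexp (C₀ * t ^ δ) := hFwd2
      _ = ‖x - θ t‖ * rexp (C₀ * t ^ δ)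
          + ((C₀ + 2 * CM) * t ^ (1/α + δ)) * rexp (C₀ * t ^ δ) := by ring
      _ ≤ rexp (C * t ^ δ) * ‖x - θ t‖ + C * t ^ (1/α + δ) := by
          rw [mul_comm (rexp (C * t ^ δ))]
          linarith
end

section
/- Assume the balance condition α + γ > 1 and set δ = 1 − 1/α + γ/α > 0 and κ_t(y) = θ_t^0(y). For every T > 0 there exists C > 0 such that for every x, y ∈ ℝ^d, every solution υ_·(x) ∈ Υ(x) of dυ_t/dt = b(υ_t), υ_0 = x, and every t ∈ [0,T], one has e^{−C t^δ} |x − κ_t(y)| − C t^{1/α + δ} ≤ |υ_t(x) − y| ≤ e^{C t^δ} |x − κ_t(y)| + C t^{1/α + δ}. -/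
open MeasureTheory Real Set

theorem integrable_gauss (d : ℕ) (c : ℝ) (hc : 0 < c) :
    Integrable (fun z : Euc d => rexp (-c * ‖z‖ ^ 2)) := by
  have h := (GaussianFourier.integrable_cexp_neg_mul_sq_norm_add (V := Euc d)
    (b := (c : ℂ)) (by simpa using hc) 0 0).re
  refine h.congr (Filter.Eventually.of_forall fun z => ?_)
  have : (-(c:ℂ) * (‖z‖:ℂ) ^ 2 + 0 * (inner ℝ (0 : Euc d) z : ℝ)) = ((-c * ‖z‖^2 : ℝ) : ℂ) := by
    push_cast; ring
  simp only []
  rw [this]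
  exact Complex.exp_ofReal_re _

theorem integrable_gauss' (d : ℕ) (c : ℝ) (hc : 0 < c) (x : Euc d) :
    Integrable (fun z : Euc d => rexp (-c * ‖z - x‖ ^ 2)) :=
  (integrable_gauss d c hc).comp_sub_right x

theorem integral_gauss' (d : ℕ) (c : ℝ) (hc : 0 < c) (x : Euc d) :
    ∫ z : Euc d, rexp (-c * ‖z - x‖ ^ 2) = (π / c) ^ ((d : ℝ) / 2) := by
  rw [integral_sub_right_eq_self (fun z : Euc d => rexp (-c * ‖z‖ ^ 2)) x,
    GaussianFourier.integral_rexp_neg_mul_sq_norm hc, finrank_euclideanSpace_fin]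

theorem cont_of_holder {d : ℕ} {C₀ γ : ℝ} (hγ : 0 < γ) {b : Euc d → Euc d}
    (hb : ∀ x y, ‖b x - b y‖ ≤ C₀ * ‖x - y‖ ^ γ) : Continuous b := by
  rw [continuous_iff_continuousAt]
  intro x
  have h1 : Filter.Tendsto (fun y : Euc d => C₀ * ‖y - x‖ ^ γ) (nhds x) (nhds 0) := by
    have h2 : Filter.Tendsto (fun y : Euc d => ‖y - x‖) (nhds x) (nhds 0) := by
      have hc : Continuous (fun y : Euc d => ‖y - x‖) :=
        (continuous_id.sub continuous_const).norm
      have := hc.tendsto x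
      simpa using this
    have h3 : ContinuousAt (fun u : ℝ => u ^ γ) 0 :=
      Real.continuousAt_rpow_const 0 γ (Or.inr hγ.le)
    have := (h3.tendsto.comp h2).const_mul C₀
    simpa [Real.zero_rpow hγ.ne'] using this
  have : Filter.Tendsto (fun y => b y - b x) (nhds x) (nhds 0) :=
    squeeze_zero_norm (fun y => hb y x) h1
  have := this.add_const (b x)
  simpa [ContinuousAt] using this

-- pointwise bound:  u^γ * exp(-u²/(2 t^{2/α})) ≤ 4 t^{γ/α} exp(-(4 t^{2/α})⁻¹ u²)
theorem aux_pt {γ α t u : ℝ} (hγ0 : 0 < γ) (hγ1 : γ ≤ 1) (hα : 0 < α) (ht : 0 < t)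
    (hu : 0 ≤ u) :
    u ^ γ * rexp (-u ^ 2 / (2 * t ^ (2 / α))) ≤
      4 * t ^ (γ / α) * rexp (-(4 * t ^ (2 / α))⁻¹ * u ^ 2) := by
  set σ : ℝ := t ^ (1 / α) with hσdef
  have hσ : 0 < σ := Real.rpow_pos_of_pos ht _
  have hσ2 : σ ^ 2 = t ^ (2 / α) := by
    rw [hσdef, ← Real.rpow_natCast (t ^ (1/α)) 2, ← Real.rpow_mul ht.le]
    norm_num
    rw [mul_comm]
    rfl
  have hσγ : σ ^ γ = t ^ (γ / α) := by
    rw [hσdef, ← Real.rpow_mul ht.le, one_div, inv_mul_eq_div]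
  set v : ℝ := u / σ with hvdef
  have hv : 0 ≤ v := div_nonneg hu hσ.le
  have huv : u = σ * v := by rw [hvdef]; field_simp
  -- v^γ ≤ 1 + v^2
  have h1 : v ^ γ ≤ 1 + v ^ 2 := by
    rcases le_total v 1 with h | h
    · have : v ^ γ ≤ 1 := Real.rpow_le_one hv h hγ0.le
      nlinarith
    · have h2 : v ^ γ ≤ v ^ (1 : ℝ) := Real.rpow_le_rpow_of_exponent_le h hγ1
      rw [Real.rpow_one] at h2
      nlinarith
  -- 1 + v^2 ≤ 4 exp(v²/4)
  have h2 : 1 + v ^ 2 ≤ 4 * rexp (v ^ 2 / 4) := by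
    have := Real.add_one_le_exp (v ^ 2 / 4)
    nlinarith [Real.exp_pos (v ^ 2 / 4)]
  have hug : u ^ γ = σ ^ γ * v ^ γ := by
    rw [huv, Real.mul_rpow hσ.le hv]
  have hv2 : v ^ 2 = u ^ 2 / σ ^ 2 := by rw [hvdef]; rw [div_pow]
  have key : u ^ γ ≤ 4 * t ^ (γ / α) * rexp (u ^ 2 / (4 * t ^ (2 / α))) := by
    rw [hug, hσγ]
    calc t ^ (γ / α) * v ^ γ ≤ t ^ (γ / α) * (4 * rexp (v ^ 2 / 4)) := by
          have := h1.trans h2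
          exact mul_le_mul_of_nonneg_left this (Real.rpow_pos_of_pos ht _).le
      _ = 4 * t ^ (γ / α) * rexp (u ^ 2 / (4 * t ^ (2 / α))) := by
          rw [hv2, hσ2]; ring_nf
  calc u ^ γ * rexp (-u ^ 2 / (2 * t ^ (2 / α)))
      ≤ (4 * t ^ (γ / α) * rexp (u ^ 2 / (4 * t ^ (2 / α)))) *
        rexp (-u ^ 2 / (2 * t ^ (2 / α))) := by
        exact mul_le_mul_of_nonneg_right key (Real.exp_pos _).le
    _ = 4 * t ^ (γ / α) * rexp (-(4 * t ^ (2 / α))⁻¹ * u ^ 2) := by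
        rw [mul_assoc, ← Real.exp_add]
        congr 2
        have hτ : (0:ℝ) < t ^ (2 / α) := Real.rpow_pos_of_pos ht _
        field_simp
        ring

theorem moll_err (d : ℕ) (α γ C₀ : ℝ) (hα : 0 < α) (hγ0 : 0 < γ) (hγ1 : γ ≤ 1)
    (hC₀ : 0 < C₀) (b : Euc d → Euc d) (hb_bdd : ∀ x, ‖b x‖ ≤ C₀)
    (hb_hol : ∀ x y, ‖b x - b y‖ ≤ C₀ * ‖x - y‖ ^ γ) :
    ∀ t : ℝ, 0 ≤ t → ∀ x : Euc d,
      ‖moll d α b t x - b x‖ ≤ 2 ^ ((d : ℝ) / 2) * (4 * C₀) * t ^ (γ / α) := by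
  intro t ht x
  rcases eq_or_lt_of_le ht with rfl | ht
  · simp [moll, Real.zero_rpow (by positivity : γ / α ≠ 0)]
  have hbc : Continuous b := cont_of_holder hγ0 hb_hol
  set τ : ℝ := t ^ (2 / α) with hτdef
  have hτ : 0 < τ := Real.rpow_pos_of_pos ht _
  set ct : ℝ := (2 * Real.pi) ^ (-(d : ℝ) / 2) * t ^ (-(d : ℝ) / α) with hctdef
  have h2pi : (0:ℝ) < 2 * π := by positivity
  have hct : 0 < ct := by
    apply mul_pos (Real.rpow_pos_of_pos h2pi _) (Real.rpow_pos_of_pos ht _)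
  have htd : τ ^ ((d:ℝ)/2) = t ^ ((d:ℝ)/α) := by
    rw [hτdef, ← Real.rpow_mul ht.le]
    congr 1
    field_simp
  have hcancel : ∀ k : ℝ, 0 < k → ct * (π / (k * τ)⁻¹) ^ ((d:ℝ)/2) =
      (k / 2) ^ ((d:ℝ)/2) := by
    intro k hk
    have h1 : π / (k * τ)⁻¹ = (2 * π) * ((k/2) * τ) := by
      field_simp
    rw [h1, Real.mul_rpow h2pi.le (by positivity), Real.mul_rpow (by positivity) hτ.le, htd]
    rw [hctdef]
    rw [show (2*π) ^ (-(d:ℝ)/2) * t ^ (-(d:ℝ)/α) * ((2*π) ^ ((d:ℝ)/2) *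
        ((k/2) ^ ((d:ℝ)/2) * t ^ ((d:ℝ)/α))) =
        ((2*π) ^ (-(d:ℝ)/2) * (2*π) ^ ((d:ℝ)/2)) * (t ^ (-(d:ℝ)/α) * t ^ ((d:ℝ)/α)) *
        (k/2) ^ ((d:ℝ)/2) by ring]
    rw [← Real.rpow_add h2pi, ← Real.rpow_add ht,
      show (-(d:ℝ)/2 + (d:ℝ)/2) = 0 by ring, show (-(d:ℝ)/α + (d:ℝ)/α) = 0 by ring,
      Real.rpow_zero, Real.rpow_zero]
    ring
  -- the weight function
  set w : Euc d → ℝ := fun z => rexp (-(2 * τ)⁻¹ * ‖z - x‖ ^ 2) with hwdef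
  have hwpos : ∀ z, 0 < w z := fun z => Real.exp_pos _
  have hw_int : Integrable w := integrable_gauss' d _ (by positivity) x
  have hw_val : ∫ z, w z = (π / (2 * τ)⁻¹) ^ ((d:ℝ)/2) := integral_gauss' d _ (by positivity) x
  have hwexp : ∀ z : Euc d, rexp (-‖z - x‖ ^ 2 / (2 * τ)) = w z := by
    intro z
    rw [hwdef]
    congr 1
    ring
  have hwc : Continuous w := by
    apply Real.continuous_exp.comp
    exact continuous_const.mul ((continuous_id.sub continuous_const).norm.pow 2)
  have hwb_int : Integrable (fun z => w z • b z) := by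
    refine (hw_int.const_mul C₀).mono' (hwc.smul hbc).aestronglyMeasurable
      (Filter.Eventually.of_forall fun z => ?_)
    rw [norm_smul, Real.norm_eq_abs, abs_of_pos (hwpos z), mul_comm C₀ (w z)]
    exact mul_le_mul_of_nonneg_left (hb_bdd z) (hwpos z).le
  have hmollrw : (fun z : Euc d => rexp (-‖z - x‖ ^ 2 / (2 * τ)) • b z) =
      fun z => w z • b z := funext fun z => by rw [hwexp]
  have hmoll : moll d α b t x = ct • ∫ z, w z • b z := by
    rw [moll, if_neg (not_le.2 ht), ← hctdef, ← hτdef, hmollrw]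
  have hsub : ∫ z, w z • (b z - b x) = (∫ z, w z • b z) - (∫ z, w z) • b x := by
    have h0 : (fun z => w z • (b z - b x)) = fun z => w z • b z - w z • b x :=
      funext fun z => smul_sub _ _ _
    rw [h0, integral_sub hwb_int (hw_int.smul_const (b x)), integral_smul_const]
  have hone : ct * (π / (2 * τ)⁻¹) ^ ((d:ℝ)/2) = 1 := by
    have h := hcancel 2 (by norm_num)
    rwa [show (2:ℝ)/2 = 1 by norm_num, Real.one_rpow] at h
  have key : moll d α b t x - b x = ct • ∫ z, w z • (b z - b x) := by
    rw [hsub, smul_sub, ← hmoll, smul_smul, hw_val, hone, one_smul]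
  have hint4 : Integrable (fun z : Euc d => rexp (-(4 * τ)⁻¹ * ‖z - x‖ ^ 2)) :=
    integrable_gauss' d _ (by positivity) x
  have hptw : ∀ z : Euc d, ‖w z • (b z - b x)‖ ≤
      (C₀ * (4 * t ^ (γ / α))) * rexp (-(4 * τ)⁻¹ * ‖z - x‖ ^ 2) := by
    intro z
    rw [norm_smul, Real.norm_eq_abs, abs_of_pos (hwpos z)]
    have h1 : w z * ‖b z - b x‖ ≤ w z * (C₀ * ‖z - x‖ ^ γ) :=
      mul_le_mul_of_nonneg_left (hb_hol z x) (hwpos z).le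
    have h2 := aux_pt (u := ‖z - x‖) hγ0 hγ1 hα ht (norm_nonneg _)
    rw [← hτdef] at h2
    rw [hwexp z] at h2
    calc w z * ‖b z - b x‖ ≤ w z * (C₀ * ‖z - x‖ ^ γ) := h1
      _ = C₀ * (‖z - x‖ ^ γ * w z) := by ring
      _ ≤ C₀ * (4 * t ^ (γ / α) * rexp (-(4 * τ)⁻¹ * ‖z - x‖ ^ 2)) :=
          mul_le_mul_of_nonneg_left h2 hC₀.le
      _ = (C₀ * (4 * t ^ (γ / α))) * rexp (-(4 * τ)⁻¹ * ‖z - x‖ ^ 2) := by ring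
  calc ‖moll d α b t x - b x‖ = ct * ‖∫ z, w z • (b z - b x)‖ := by
        rw [key, norm_smul, Real.norm_eq_abs, abs_of_pos hct]
    _ ≤ ct * ∫ z, ‖w z • (b z - b x)‖ :=
        mul_le_mul_of_nonneg_left (norm_integral_le_integral_norm _) hct.le
    _ ≤ ct * ∫ z, (C₀ * (4 * t ^ (γ / α))) * rexp (-(4 * τ)⁻¹ * ‖z - x‖ ^ 2) := by
        refine mul_le_mul_of_nonneg_left ?_ hct.le
        refine integral_mono_of_nonneg
          (Filter.Eventually.of_forall fun z => norm_nonneg _)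
          (hint4.const_mul _) (Filter.Eventually.of_forall fun z => hptw z)
    _ = (C₀ * (4 * t ^ (γ / α))) * (ct * (π / (4 * τ)⁻¹) ^ ((d:ℝ)/2)) := by
        rw [integral_const_mul, integral_gauss' d _ (by positivity) x]
        ring
    _ = 2 ^ ((d : ℝ) / 2) * (4 * C₀) * t ^ (γ / α) := by
        rw [hcancel 4 (by norm_num)]
        norm_num
        ring

theorem gron_est {d₀ K ε t : ℝ} (hd : 0 ≤ d₀) (hK : 0 < K) (hε : 0 ≤ ε) (ht : 0 ≤ t) :
    gronwallBound d₀ K ε t ≤ d₀ * rexp (K * t) + ε * t * rexp (K * t) := by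
  rw [gronwallBound_of_K_ne_0 hK.ne']
  have h1 : rexp (K * t) - 1 ≤ (K * t) * rexp (K * t) := by
    have h2 : 1 - K * t ≤ rexp (-(K * t)) := by
      have := Real.add_one_le_exp (-(K * t)); linarith
    have h3 := mul_le_mul_of_nonneg_left h2 (Real.exp_pos (K * t)).le
    rw [← Real.exp_add] at h3
    simp at h3
    nlinarith [Real.exp_pos (K * t)]
  have h4 : ε / K * (rexp (K * t) - 1) ≤ ε / K * ((K * t) * rexp (K * t)) :=
    mul_le_mul_of_nonneg_left h1 (div_nonneg hε hK.le)
  have h5 : ε / K * ((K * t) * rexp (K * t)) = ε * t * rexp (K * t) := by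
    field_simp
  linarith

theorem young_ineq {u t γ α δ : ℝ} (hu : 0 ≤ u) (ht : 0 < t) (hγ0 : 0 < γ) (hγ1 : γ ≤ 1)
    (hα : 0 < α) (hδ : δ = 1 - 1 / α + γ / α) :
    u ^ γ ≤ t ^ (δ - 1) * u + t ^ (γ / α) := by
  have hp1 : (0:ℝ) ≤ t ^ (δ - 1) * u := mul_nonneg (Real.rpow_pos_of_pos ht _).le hu
  have hp2 : (0:ℝ) ≤ t ^ (γ / α) := (Real.rpow_pos_of_pos ht _).le
  have key := Real.geom_mean_le_arith_mean2_weighted hγ0.le (by linarith : (0:ℝ) ≤ 1 - γ)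
    hp1 hp2 (by ring)
  have hlhs : (t ^ (δ - 1) * u) ^ γ * (t ^ (γ / α)) ^ (1 - γ) = u ^ γ := by
    rw [Real.mul_rpow (Real.rpow_pos_of_pos ht _).le hu,
      ← Real.rpow_mul ht.le, ← Real.rpow_mul ht.le]
    have hexp : (δ - 1) * γ + γ / α * (1 - γ) = 0 := by
      rw [hδ]; field_simp; ring
    rw [show (t ^ ((δ - 1) * γ) * u ^ γ * t ^ (γ / α * (1 - γ)))
        = (t ^ ((δ - 1) * γ) * t ^ (γ / α * (1 - γ))) * u ^ γ by ring,
      ← Real.rpow_add ht, hexp, Real.rpow_zero, one_mul]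
  rw [hlhs] at key
  have : γ * (t ^ (δ - 1) * u) + (1 - γ) * t ^ (γ / α)
      ≤ t ^ (δ - 1) * u + t ^ (γ / α) := by nlinarith
  linarith

theorem exact_flow_vs_backward_approximate_flow
    (d : ℕ) (hd : 1 ≤ d) (α γ C₀ : ℝ)
    (hα : α ∈ Set.Ioo (0 : ℝ) 2) (hγ : γ ∈ Set.Ioc (0 : ℝ) 1) (hC₀ : 0 < C₀)
    (b : Euc d → Euc d)
    (hb_bdd : ∀ x, ‖b x‖ ≤ C₀)
    (hb_hol : ∀ x y, ‖b x - b y‖ ≤ C₀ * ‖x - y‖ ^ γ)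
    (hbal : 1 < α + γ)
    (δ : ℝ) (hδ : δ = 1 - 1 / α + γ / α) :
    ∀ T > (0 : ℝ), ∃ C > (0 : ℝ), ∀ x y : Euc d,
      ∀ υ : ℝ → Euc d, IsSol d (fun _ z => b z) x υ →
      ∀ θ : ℝ → Euc d, IsSol d (fun τ z => -moll d α b |τ| z) y θ →
      ∀ t ∈ Set.Icc (0 : ℝ) T,
        Real.exp (-(C * t ^ δ)) * ‖x - θ t‖ - C * t ^ (1 / α + δ) ≤ ‖υ t - y‖ ∧
        ‖υ t - y‖ ≤ Real.exp (C * t ^ δ) * ‖x - θ t‖ + C * t ^ (1 / α + δ) := by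
  intro T hT
  have hα0 : 0 < α := hα.1
  have hγ0 : 0 < γ := hγ.1
  have hγ1 : γ ≤ 1 := hγ.2
  have hδpos : 0 < δ := by
    have h1 : δ = (α - 1 + γ) / α := by rw [hδ]; field_simp
    rw [h1]
    exact div_pos (by linarith) hα0
  have hmerr := moll_err d α γ C₀ hα0 hγ0 hγ1 hC₀ b hb_bdd hb_hol
  set C₁ : ℝ := 2 ^ ((d:ℝ)/2) * (4 * C₀) with hC₁def
  have hC₁pos : 0 < C₁ := by rw [hC₁def]; positivity
  set C : ℝ := (C₀ + C₁) * rexp (C₀ * T ^ δ) + C₀ with hCdef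
  have hCpos : 0 < C := by
    have := Real.exp_pos (C₀ * T ^ δ); nlinarith
  have hC₀C : C₀ ≤ C := by
    have := Real.exp_pos (C₀ * T ^ δ); nlinarith
  refine ⟨C, hCpos, ?_⟩
  intro x y υ hυ θ hθ t htI
  obtain ⟨ht0, htT⟩ := htI
  have hpexp : (0:ℝ) < 1 / α + δ := by positivity
  rcases eq_or_lt_of_le ht0 with rfl | ht
  · rw [Real.zero_rpow hδpos.ne', Real.zero_rpow hpexp.ne', hυ.1, hθ.1]
    simp
  -- t > 0 from now on
  have hcυ : ContinuousOn υ (Ici 0) := fun s hs => (hυ.2 s hs).continuousWithinAt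
  have hcθ : ContinuousOn θ (Ici 0) := fun s hs => (hθ.2 s hs).continuousWithinAt
  set K : ℝ := C₀ * t ^ (δ - 1) with hKdef
  have hK : 0 < K := by rw [hKdef]; positivity
  set ε' : ℝ := (C₀ + C₁) * t ^ (γ / α) with hεdef
  have hε' : 0 < ε' := by
    rw [hεdef]
    have : (0:ℝ) < t ^ (γ/α) := Real.rpow_pos_of_pos ht _
    nlinarith
  -- the common bound on the vector field difference
  have hvf : ∀ u v : Euc d, ∀ s, 0 ≤ s → s ≤ t →
      ‖b u - moll d α b s v‖ ≤ K * ‖u - v‖ + ε' := by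
    intro u v s hs0 hst
    have e1 : ‖b u - moll d α b s v‖ ≤ ‖b u - b v‖ + ‖b v - moll d α b s v‖ := by
      have h := dist_triangle (b u) (b v) (moll d α b s v)
      rw [dist_eq_norm, dist_eq_norm, dist_eq_norm] at h
      exact h
    have e2 : ‖b u - b v‖ ≤ C₀ * ‖u - v‖ ^ γ := hb_hol u v
    have e3 : ‖u - v‖ ^ γ ≤ t ^ (δ - 1) * ‖u - v‖ + t ^ (γ / α) :=
      young_ineq (norm_nonneg _) ht hγ0 hγ1 hα0 hδ
    have e4 : ‖b v - moll d α b s v‖ ≤ C₁ * s ^ (γ / α) := by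
      rw [norm_sub_rev]
      exact hmerr s hs0 v
    have e5 : s ^ (γ/α) ≤ t ^ (γ/α) := Real.rpow_le_rpow hs0 hst (by positivity)
    have e2' : ‖b u - b v‖ ≤ C₀ * (t ^ (δ - 1) * ‖u - v‖ + t ^ (γ / α)) :=
      e2.trans (mul_le_mul_of_nonneg_left e3 hC₀.le)
    have e4' : ‖b v - moll d α b s v‖ ≤ C₁ * t ^ (γ / α) :=
      e4.trans (mul_le_mul_of_nonneg_left e5 hC₁pos.le)
    rw [hKdef, hεdef]
    nlinarith
  -- Claim 1 : ‖υ t - y‖ ≤ gronwallBound ‖x - θ t‖ K ε' t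
  have claim1 : ‖υ t - y‖ ≤ gronwallBound ‖x - θ t‖ K ε' t := by
    have hf_cont : ContinuousOn (fun s => υ s - θ (t - s)) (Icc 0 t) := by
      apply ContinuousOn.sub (hcυ.mono Icc_subset_Ici_self)
      refine hcθ.comp (continuous_const.sub continuous_id).continuousOn ?_
      intro s hs
      exact sub_nonneg.2 hs.2
    have hf_deriv : ∀ s ∈ Ico 0 t, HasDerivWithinAt (fun s => υ s - θ (t - s))
        ((fun s => b (υ s) - moll d α b (t - s) (θ (t - s))) s) (Ici s) s := by
      intro s hs
      have h1 : HasDerivWithinAt υ (b (υ s)) (Ici s) s :=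
        (hυ.2 s hs.1).mono (Ici_subset_Ici.2 hs.1)
      have hts : 0 < t - s := by have := hs.2; simp only [mem_Ico] at hs; linarith [hs.2]
      have h2 : HasDerivAt θ (-moll d α b |t - s| (θ (t - s))) (t - s) :=
        (hθ.2 (t - s) hts.le).hasDerivAt (Ici_mem_nhds hts)
      have h3 : HasDerivAt (fun s : ℝ => t - s) (-1) s := (hasDerivAt_id s).const_sub t
      have h4 := HasDerivAt.scomp (x := s) h2 h3
      rw [abs_of_pos hts] at h4
      have h5 : HasDerivAt (fun s => θ (t - s)) (moll d α b (t - s) (θ (t - s))) s := by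
        have heq : (-1 : ℝ) • -moll d α b (t - s) (θ (t - s)) =
            moll d α b (t - s) (θ (t - s)) := by simp
        rw [heq] at h4
        exact h4
      exact h1.sub h5.hasDerivWithinAt
    have hf_bound : ∀ s ∈ Ico 0 t,
        ‖(fun s => b (υ s) - moll d α b (t - s) (θ (t - s))) s‖ ≤
          K * ‖υ s - θ (t - s)‖ + ε' := by
      intro s hs
      exact hvf (υ s) (θ (t - s)) (t - s) (by linarith [hs.2]) (by linarith [hs.1])
    have h := norm_le_gronwallBound_of_norm_deriv_right_le hf_cont hf_deriv le_rfl hf_bound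
      t ⟨ht.le, le_refl t⟩
    rw [sub_zero] at h
    have h0 : υ 0 - θ t = x - θ t := by rw [hυ.1]
    have h1 : υ t - θ (t - t) = υ t - y := by rw [sub_self, hθ.1]
    rw [h0, h1] at h
    exact h
  -- Claim 2 : ‖x - θ t‖ ≤ gronwallBound ‖υ t - y‖ K ε' t
  have claim2 : ‖x - θ t‖ ≤ gronwallBound ‖υ t - y‖ K ε' t := by
    have hg_cont : ContinuousOn (fun s => υ (t - s) - θ s) (Icc 0 t) := by
      refine ContinuousOn.sub ?_ (hcθ.mono Icc_subset_Ici_self)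
      refine hcυ.comp (continuous_const.sub continuous_id).continuousOn ?_
      intro s hs
      exact sub_nonneg.2 hs.2
    have hg_deriv : ∀ s ∈ Ico 0 t, HasDerivWithinAt (fun s => υ (t - s) - θ s)
        ((fun s => moll d α b s (θ s) - b (υ (t - s))) s) (Ici s) s := by
      intro s hs
      have hts : 0 < t - s := by simp only [mem_Ico] at hs; linarith [hs.2]
      have h1 : HasDerivAt υ (b (υ (t - s))) (t - s) :=
        (hυ.2 (t - s) hts.le).hasDerivAt (Ici_mem_nhds hts)
      have h3 : HasDerivAt (fun s : ℝ => t - s) (-1) s := (hasDerivAt_id s).const_sub t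
      have h4 := HasDerivAt.scomp (x := s) h1 h3
      have h2 : HasDerivWithinAt θ (-moll d α b |s| (θ s)) (Ici s) s :=
        (hθ.2 s hs.1).mono (Ici_subset_Ici.2 hs.1)
      rw [abs_of_nonneg hs.1] at h2
      have h5 := h4.hasDerivWithinAt (s := Ici s) |>.sub h2
      have heq : (-1 : ℝ) • b (υ (t - s)) - -moll d α b s (θ s) =
          moll d α b s (θ s) - b (υ (t - s)) := by
        simp
        abel
      rw [heq] at h5
      exact h5
    have hg_bound : ∀ s ∈ Ico 0 t,
        ‖(fun s => moll d α b s (θ s) - b (υ (t - s))) s‖ ≤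
          K * ‖υ (t - s) - θ s‖ + ε' := by
      intro s hs
      rw [norm_sub_rev]
      have := hvf (υ (t - s)) (θ s) s hs.1 hs.2.le
      rwa [norm_sub_rev (υ (t - s))] at this ⊢
    have h := norm_le_gronwallBound_of_norm_deriv_right_le hg_cont hg_deriv le_rfl hg_bound
      t ⟨ht.le, le_refl t⟩
    rw [sub_zero] at h
    have h0 : υ t - θ 0 = υ t - y := by rw [hθ.1]
    have h1 : υ (t - t) - θ t = x - θ t := by rw [sub_self, hυ.1]
    rw [h0, h1] at h
    exact h
  -- numeric assembly
  have hKt : K * t = C₀ * t ^ δ := by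
    rw [hKdef, mul_assoc]
    congr 1
    have h1 : t ^ (δ - 1) * t ^ (1:ℝ) = t ^ δ := by
      rw [← Real.rpow_add ht]; norm_num
    rw [← h1, Real.rpow_one]
  have hεt : ε' * t = (C₀ + C₁) * t ^ (1 / α + δ) := by
    rw [hεdef, mul_assoc]
    congr 1
    have h1 : t ^ (γ / α) * t = t ^ (γ / α) * t ^ (1:ℝ) := by rw [Real.rpow_one]
    rw [h1, ← Real.rpow_add ht]
    congr 1
    rw [hδ]; ring
  have hApos : (0:ℝ) ≤ ‖x - θ t‖ := norm_nonneg _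
  have hBpos : (0:ℝ) ≤ ‖υ t - y‖ := norm_nonneg _
  have hgb : ∀ u v : ℝ, 0 ≤ u → 0 ≤ v → gronwallBound u K ε' t ≤
      rexp (C * t ^ δ) * u + C * t ^ (1 / α + δ) := by
    intro u v hu hv
    have h1 := gron_est (d₀ := u) hu hK hε'.le ht.le
    have h2 : rexp (K * t) ≤ rexp (C * t ^ δ) := by
      rw [hKt]
      apply Real.exp_le_exp.2
      exact mul_le_mul_of_nonneg_right hC₀C (Real.rpow_pos_of_pos ht _).le
    have h3 : ε' * t * rexp (K * t) ≤ C * t ^ (1 / α + δ) := by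
      rw [hεt, hKt]
      have h4 : rexp (C₀ * t ^ δ) ≤ rexp (C₀ * T ^ δ) := by
        apply Real.exp_le_exp.2
        exact mul_le_mul_of_nonneg_left
          (Real.rpow_le_rpow ht0 htT hδpos.le) hC₀.le
      have h5 : (C₀ + C₁) * rexp (C₀ * t ^ δ) ≤ C := by
        have h5a : (C₀ + C₁) * rexp (C₀ * t ^ δ) ≤ (C₀ + C₁) * rexp (C₀ * T ^ δ) :=
          mul_le_mul_of_nonneg_left h4 (by positivity)
        rw [hCdef]
        linarith
      have h6 : (0:ℝ) < t ^ (1 / α + δ) := Real.rpow_pos_of_pos ht _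
      have h7 := mul_le_mul_of_nonneg_right h5 h6.le
      linarith [h7]
    have h7 : u * rexp (K * t) ≤ rexp (C * t ^ δ) * u := by
      rw [mul_comm]
      exact mul_le_mul_of_nonneg_right h2 hu
    linarith
  have hupper : ‖υ t - y‖ ≤ rexp (C * t ^ δ) * ‖x - θ t‖ + C * t ^ (1 / α + δ) :=
    claim1.trans (hgb _ _ hApos hBpos)
  have hAup : ‖x - θ t‖ ≤ rexp (C * t ^ δ) * ‖υ t - y‖ + C * t ^ (1 / α + δ) :=
    claim2.trans (hgb _ _ hBpos hApos)
  refine ⟨?_, hupper⟩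
  -- lower bound
  set E : ℝ := rexp (C * t ^ δ) with hEdef
  have hEpos : 0 < E := Real.exp_pos _
  have hE1 : 1 ≤ E := Real.one_le_exp (by positivity)
  have hctp : (0:ℝ) ≤ C * t ^ (1 / α + δ) := by positivity
  rw [Real.exp_neg, ← hEdef]
  have h7 := mul_le_mul_of_nonneg_left hAup (inv_nonneg.2 hEpos.le)
  have h8 : E⁻¹ * (E * ‖υ t - y‖ + C * t ^ (1 / α + δ)) =
      ‖υ t - y‖ + E⁻¹ * (C * t ^ (1 / α + δ)) := by
    field_simp
  have h9 : E⁻¹ * (C * t ^ (1 / α + δ)) ≤ C * t ^ (1 / α + δ) := by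
    apply mul_le_of_le_one_left hctp
    exact inv_le_one_of_one_le₀ hE1
  linarith
end
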